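/- Let (G, B₁, B₂) be a Rota-Baxter system of groups with descendent operation ∘. Then the sets G_t = {a ∈ G | a ∘ e_t = a}, for t ∈ G, partition G: every element of G lies in exactly one set G_t (distinct sets G_{t₁}, G_{t₂} are either equal or disjoint, and G is their union). -/
import Mathlib


theorem stmt_17 {G : Type*} [Group G] (B₁ B₂ : G → G)
    (h1 : ∀ a b : G, B₁ a * B₁ b = B₁ (B₁ a * b * B₂ a))
    (h2 : ∀ a b : G, B₂ b * B₂ a = B₂ (B₁ a * b * B₂ a))
    (circ : G → G → G) (hcirc : ∀ a b, circ a b = B₁ a * b * B₂ a)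
    (e : G → G) (he : ∀ t, e t = (B₁ t)⁻¹ * t * (B₂ t)⁻¹)
    (Gt : G → Set G) (hGt : ∀ t, Gt t = {a : G | circ a (e t) = a}) :
    (∀ a : G, ∃ t : G, a ∈ Gt t) ∧
    (∀ t₁ t₂ : G, Gt t₁ = Gt t₂ ∨ Disjoint (Gt t₁) (Gt t₂)) := by
  have key : ∀ t a : G, a ∈ Gt t ↔ e t = e a := by
    intro t a
    rw [hGt, Set.mem_setOf_eq, hcirc, he a]
    constructor
    · intro h
      calc e t = (B₁ a)⁻¹ * (B₁ a * e t * B₂ a) * (B₂ a)⁻¹ := by group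
        _ = (B₁ a)⁻¹ * a * (B₂ a)⁻¹ := by rw [h]
    · intro h
      rw [h]
      group
  constructor
  · intro a
    exact ⟨a, (key a a).2 rfl⟩
  · intro t₁ t₂
    by_cases h : e t₁ = e t₂
    · left
      ext a
      rw [key, key, h]
    · right
      rw [Set.disjoint_left]
      intro a h1 h2
      exact h (((key t₁ a).1 h1).trans ((key t₂ a).1 h2).symm)
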